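/- Let X_1, X_2, … be mutually independent random variables such that X_n is exponentially distributed with rate λ_n > 0, where the sequence (λ_n) is increasing in n, and let N(t) = sup{n ≥ 0 : X_1 + ⋯ + X_n ≤ t} be the associated counting process (a pure birth process with rates λ_n). If T is a DFR nonnegative random time independent of the process, then N(T) is d-DFR. -/

import Mathlib

open MeasureTheory ProbabilityTheory

variable {Ω : Type*} [MeasurableSpace Ω]

/-- Survival function of a random variable `T`: `F̄_T(t) = P(T > t)`. -/
noncomputable def surv (μ : Measure Ω) (T : Ω → ℝ) (t : ℝ) : ℝ :=
  (μ {ω | t < T ω}).toReal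

/-- `T` has the decreasing failure rate (DFR) property:
`F̄_T(s+z)·F̄_T(t) ≤ F̄_T(t+z)·F̄_T(s)` for all `0 ≤ s ≤ t` and `z ≥ 0`
(log-convexity of the survival function on `[0,∞)`). -/
def IsDFR (μ : Measure Ω) (T : Ω → ℝ) : Prop :=
  ∀ s t z : ℝ, 0 ≤ s → s ≤ t → 0 ≤ z →
    μ {ω | s + z < T ω} * μ {ω | t < T ω} ≤ μ {ω | t + z < T ω} * μ {ω | s < T ω}

/-- Arrival times: `S n = X 1 + ⋯ + X n` (with 0-based indexing of the
interarrival times, `X i` is the `(i+1)`-st interarrival time), `S 0 = 0`. -/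
noncomputable def arr (X : ℕ → Ω → ℝ) (n : ℕ) (ω : Ω) : ℝ :=
  ∑ i ∈ Finset.range n, X i ω

/-- The counting process `N(t) = sup {n ≥ 0 : S n ≤ t}` (valued in `ℕ∞`,
allowing infinitely many arrivals). -/
noncomputable def countN (X : ℕ → Ω → ℝ) (t : ℝ) (ω : Ω) : ℕ∞ :=
  sSup ((fun n : ℕ => (n : ℕ∞)) '' {n : ℕ | arr X n ω ≤ t})

/-- A (possibly defective) `ℕ∞`-valued random variable `M` is discrete DFR:
`P(M ≥ n+1)² ≤ P(M ≥ n)·P(M ≥ n+2)` for all `n`. -/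
def IsdDFR (μ : Measure Ω) (M : Ω → ℕ∞) : Prop :=
  ∀ n : ℕ,
    μ {ω | (n : ℕ∞) + 1 ≤ M ω} ^ 2 ≤
      μ {ω | (n : ℕ∞) ≤ M ω} * μ {ω | (n : ℕ∞) + 2 ≤ M ω}


section AuxLemmas
open Filter

lemma arr_mono {X : ℕ → Ω → ℝ} (hX : ∀ n ω, 0 ≤ X n ω) (ω : Ω) :
    Monotone (fun n => arr X n ω) := by
  intro a b hab
  simp only [arr]
  exact Finset.sum_le_sum_of_subset_of_nonneg (Finset.range_subset_range.2 hab)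
    (fun i _ _ => hX i ω)

lemma arr_nonneg {X : ℕ → Ω → ℝ} (hX : ∀ n ω, 0 ≤ X n ω) (n : ℕ) (ω : Ω) :
    0 ≤ arr X n ω :=
  Finset.sum_nonneg fun i _ => hX i ω

lemma countN_ge_iff {X : ℕ → Ω → ℝ} (hX : ∀ n ω, 0 ≤ X n ω) {t : ℝ} (ht : 0 ≤ t)
    (k : ℕ) (ω : Ω) :
    (k : ℕ∞) ≤ countN X t ω ↔ arr X k ω ≤ t := by
  constructor
  · intro h
    by_contra hc
    push_neg at hc
    rcases k with _ | k
    · have : arr X 0 ω = 0 := by simp [arr]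
      rw [this] at hc
      exact absurd ht (not_le.2 hc)
    · have hb : countN X t ω ≤ (k : ℕ∞) := by
        apply sSup_le
        rintro x ⟨m, hm, rfl⟩
        have : m ≤ k := by
          by_contra hmk
          push_neg at hmk
          exact absurd (le_trans (arr_mono hX ω hmk) hm) (not_le.2 hc)
        simp only []
        exact_mod_cast this
      have := le_trans h hb
      exact absurd this (by exact_mod_cast Nat.not_succ_le_self k)
  · intro h
    exact le_sSup ⟨k, h, rfl⟩

lemma surv_tendsto (μ : Measure Ω) [IsProbabilityMeasure μ] {T : Ω → ℝ}
    (hTmeas : Measurable T) (a : ℝ) {c : ℝ} (hc : 0 < c) :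
    Tendsto (fun m : ℕ => μ {ω | a - c / (m + 1) < T ω}) atTop
      (nhds (μ {ω | a ≤ T ω})) := by
  have hIter : ⋂ m : ℕ, {ω | a - c / (m + 1 : ℝ) < T ω} = {ω | a ≤ T ω} := by
    ext ω
    simp only [Set.mem_iInter, Set.mem_setOf_eq]
    constructor
    · intro h
      by_contra hlt
      push_neg at hlt
      obtain ⟨m, hm⟩ := exists_nat_gt (c / (a - T ω))
      have hpos : (0:ℝ) < a - T ω := by linarith
      have h1 : c / (m + 1 : ℝ) < a - T ω := by
        rw [div_lt_iff₀ (by positivity)]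
        rw [div_lt_iff₀ hpos] at hm
        nlinarith [hpos.le, hm]
      have := h m
      linarith
    · intro h m
      have : (0:ℝ) < c / (m + 1 : ℝ) := by positivity
      linarith
  have := MeasureTheory.tendsto_measure_iInter_atTop
    (μ := μ) (s := fun m : ℕ => {ω | a - c / (m + 1 : ℝ) < T ω})
    (fun m => (hTmeas measurableSet_Ioi).nullMeasurableSet)
    (fun m m' hmm' => by
      intro ω hω
      simp only [Set.mem_setOf_eq] at *
      have h1 : c / (m' + 1 : ℝ) ≤ c / (m + 1 : ℝ) := by
        apply div_le_div_of_nonneg_left hc.le (by positivity)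
        have : (m : ℝ) ≤ m' := Nat.cast_le.2 hmm'
        linarith
      linarith)
    ⟨0, measure_ne_top μ _⟩
  rwa [hIter] at this

lemma surv_key (μ : Measure Ω) [IsProbabilityMeasure μ] {T : Ω → ℝ}
    (hTmeas : Measurable T) (hDFR : IsDFR μ T)
    {s x y : ℝ} (hs : 0 ≤ s) (hx : 0 ≤ x) (hy : 0 ≤ y) :
    μ {ω | s + x ≤ T ω} * μ {ω | s + y ≤ T ω} ≤
      μ {ω | s ≤ T ω} * μ {ω | s + x + y ≤ T ω} := by
  rcases eq_or_lt_of_le hx with hx0 | hxpos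
  · rw [← hx0]
    simp only [add_zero, zero_add]
    exact mul_comm (μ {ω | s ≤ T ω}) (μ {ω | s + y ≤ T ω}) ▸ le_rfl
  rcases eq_or_lt_of_le hy with hy0 | hypos
  · rw [← hy0]
    simp only [add_zero]
    exact (mul_comm (μ {ω | s + x ≤ T ω}) (μ {ω | s ≤ T ω})) ▸ le_rfl
  -- main case: 0 < x, 0 < y
  set c := min x y with hc
  have hcpos : 0 < c := lt_min hxpos hypos
  set F : ℝ → ENNReal := fun r => μ {ω | r < T ω} with hF
  set H : ℝ → ENNReal := fun r => μ {ω | r ≤ T ω} with hH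
  have hstep : ∀ m : ℕ,
      F ((s + y) - c / (m+1)) * F ((s + x) - c / (m+1)) ≤
        F ((s + x + y) - (2*c) / (m+1)) * F s := by
    intro m
    have hεpos : 0 < c / (m+1 : ℝ) := by positivity
    have hεx : c / (m+1 : ℝ) ≤ x := by
      calc c / (m+1:ℝ) ≤ c / 1 := by
            apply div_le_div_of_nonneg_left hcpos.le one_pos
            exact_mod_cast by linarith [Nat.cast_nonneg (α := ℝ) m]
        _ = c := div_one c
        _ ≤ x := min_le_left x y
    have hεy : c / (m+1 : ℝ) ≤ y := le_trans (by
      calc c / (m+1:ℝ) ≤ c / 1 := by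
            apply div_le_div_of_nonneg_left hcpos.le one_pos
            exact_mod_cast by linarith [Nat.cast_nonneg (α := ℝ) m]
        _ = c := div_one c) (min_le_right x y)
    have := hDFR s (s + x - c/(m+1)) (y - c/(m+1)) hs (by linarith) (by linarith)
    have e1 : s + (y - c/(m+1)) = (s + y) - c/(m+1) := by ring
    have e2 : s + x - c/(m+1) + (y - c/(m+1)) = (s + x + y) - (2*c)/(m+1) := by ring
    have e3 : s + x - c/(m+1) = (s + x) - c/(m+1) := by ring
    rw [e1, e2, e3] at this
    exact this
  have hL : Tendsto (fun m : ℕ =>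
      F ((s + y) - c / (m+1)) * F ((s + x) - c / (m+1))) atTop
      (nhds (H (s + y) * H (s + x))) := by
    apply ENNReal.Tendsto.mul (surv_tendsto μ hTmeas (s+y) hcpos)
      (Or.inr (measure_ne_top μ _)) (surv_tendsto μ hTmeas (s+x) hcpos)
      (Or.inr (measure_ne_top μ _))
  have hR : Tendsto (fun m : ℕ =>
      F ((s + x + y) - (2*c) / (m+1)) * F s) atTop
      (nhds (H (s + x + y) * F s)) := by
    apply ENNReal.Tendsto.mul (surv_tendsto μ hTmeas (s+x+y) (by positivity))
      (Or.inr (measure_ne_top μ _)) tendsto_const_nhds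
      (Or.inr (measure_ne_top μ _))
  have hmain : H (s + y) * H (s + x) ≤ H (s + x + y) * F s :=
    le_of_tendsto_of_tendsto' hL hR hstep
  have hFH : F s ≤ H s := measure_mono (fun ω hω => by
    simp only [Set.mem_setOf_eq] at *; linarith)
  calc μ {ω | s + x ≤ T ω} * μ {ω | s + y ≤ T ω}
      = H (s + y) * H (s + x) := mul_comm _ _
    _ ≤ H (s + x + y) * F s := hmain
    _ ≤ H (s + x + y) * H s := by gcongr
    _ = μ {ω | s ≤ T ω} * μ {ω | s + x + y ≤ T ω} := mul_comm _ _

lemma arr_measurable {X : ℕ → Ω → ℝ} (hX : ∀ n, Measurable (X n)) (n : ℕ) :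
    Measurable (arr X n) := by
  unfold arr
  exact Finset.measurable_sum _ (fun i _ => hX i)

/-- measurability of the (≥)-survival function -/
lemma H_measurable (μ : Measure Ω) [IsProbabilityMeasure μ] {T : Ω → ℝ}
    (hTmeas : Measurable T) :
    Measurable (fun s : ℝ => μ {ω | s ≤ T ω}) := by
  have h1 : Measurable (fun s : ℝ => (μ.map T) {t : ℝ | s ≤ t}) := by
    haveI : SFinite (μ.map T) := by
      haveI : IsProbabilityMeasure (μ.map T) := Measure.isProbabilityMeasure_map hTmeas.aemeasurable
      infer_instance
    have := measurable_measure_prodMk_left (ν := μ.map T)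
      (s := {p : ℝ × ℝ | p.1 ≤ p.2}) (measurableSet_le measurable_fst measurable_snd)
    exact this
  have h2 : (fun s : ℝ => μ {ω | s ≤ T ω}) = fun s : ℝ => (μ.map T) {t : ℝ | s ≤ t} := by
    funext s
    rw [Measure.map_apply hTmeas (by exact measurableSet_Ici)]
    rfl
  rw [h2]; exact h1

/-- representation of the event probability as an integral of H ∘ arr -/
lemma event_repr (μ : Measure Ω) [IsProbabilityMeasure μ]
    (X : ℕ → Ω → ℝ) (T : Ω → ℝ)
    (hXmeas : ∀ n, Measurable (X n)) (hTmeas : Measurable T)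
    (hindep : IndepFun T (fun ω n => X n ω) μ) (n : ℕ) :
    μ {ω | arr X n ω ≤ T ω} = ∫⁻ ω, μ {ω' | arr X n ω ≤ T ω'} ∂μ := by
  have hS : Measurable (arr X n) := arr_measurable hXmeas n
  have hψ : Measurable (fun v : ℕ → ℝ => ∑ i ∈ Finset.range n, v i) :=
    Finset.measurable_sum _ (fun i _ => measurable_pi_apply i)
  have hTS : IndepFun T (arr X n) μ := by
    have := hindep.comp measurable_id hψ
    exact this
  have hmap : Measure.map (fun ω => (T ω, arr X n ω)) μ
      = (μ.map T).prod (μ.map (arr X n)) :=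
    (indepFun_iff_map_prod_eq_prod_map_map hTmeas.aemeasurable hS.aemeasurable).1 hTS
  haveI : IsProbabilityMeasure (μ.map T) := Measure.isProbabilityMeasure_map hTmeas.aemeasurable
  haveI : IsProbabilityMeasure (μ.map (arr X n)) := Measure.isProbabilityMeasure_map hS.aemeasurable
  have hset : MeasurableSet {p : ℝ × ℝ | p.2 ≤ p.1} :=
    measurableSet_le measurable_snd measurable_fst
  have e1 : {ω | arr X n ω ≤ T ω}
      = (fun ω => (T ω, arr X n ω)) ⁻¹' {p : ℝ × ℝ | p.2 ≤ p.1} := rfl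
  rw [e1, ← Measure.map_apply (hTmeas.prodMk hS) hset, hmap,
    Measure.prod_apply_symm hset]
  have e2 : ∀ s : ℝ, (μ.map T) ((fun t => (t, s)) ⁻¹' {p : ℝ × ℝ | p.2 ≤ p.1})
      = μ {ω | s ≤ T ω} := by
    intro s
    rw [Measure.map_apply hTmeas (by exact measurableSet_Ici)]
    rfl
  calc ∫⁻ s, (μ.map T) ((fun t => (t, s)) ⁻¹' {p : ℝ × ℝ | p.2 ≤ p.1}) ∂(μ.map (arr X n))
      = ∫⁻ s, μ {ω' | s ≤ T ω'} ∂(μ.map (arr X n)) := by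
        congr 1; funext s; exact e2 s
    _ = ∫⁻ ω, μ {ω' | arr X n ω ≤ T ω'} ∂μ :=
        lintegral_map (H_measurable μ hTmeas) hS

/-- disintegration step using independence of `arr X k` and `X k` -/
lemma key_step (μ : Measure Ω) [IsProbabilityMeasure μ]
    (X : ℕ → Ω → ℝ) (hXmeas : ∀ n, Measurable (X n))
    (hiid : iIndepFun X μ)
    (k : ℕ) {f : ℝ → ENNReal} (hf : Measurable f) :
    ∫⁻ ω, f (arr X k ω + X k ω) ∂μ
      = ∫⁻ ω, ∫⁻ x, f (arr X k ω + x) ∂(μ.map (X k)) ∂μ := by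
  have hS : Measurable (arr X k) := arr_measurable hXmeas k
  have harr : arr X k = ∑ j ∈ Finset.range k, X j := by
    funext ω; simp [arr, Finset.sum_apply]
  have hSX : IndepFun (arr X k) (X k) μ := by
    rw [harr]
    exact hiid.indepFun_finsetSum_of_notMem hXmeas (by simp)
  have hmap : Measure.map (fun ω => (arr X k ω, X k ω)) μ
      = (μ.map (arr X k)).prod (μ.map (X k)) :=
    (indepFun_iff_map_prod_eq_prod_map_map hS.aemeasurable
      (hXmeas k).aemeasurable).1 hSX
  haveI : IsProbabilityMeasure (μ.map (arr X k)) := Measure.isProbabilityMeasure_map hS.aemeasurable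
  haveI : IsProbabilityMeasure (μ.map (X k)) := Measure.isProbabilityMeasure_map (hXmeas k).aemeasurable
  have hF : Measurable (fun p : ℝ × ℝ => f (p.1 + p.2)) :=
    hf.comp (measurable_fst.add measurable_snd)
  have hg : Measurable (fun s : ℝ => ∫⁻ x, f (s + x) ∂(μ.map (X k))) :=
    Measurable.lintegral_prod_right (f := fun s x => f (s + x)) hF
  calc ∫⁻ ω, f (arr X k ω + X k ω) ∂μ
      = ∫⁻ p, f (p.1 + p.2) ∂(Measure.map (fun ω => (arr X k ω, X k ω)) μ) :=
        (lintegral_map hF (hS.prodMk (hXmeas k))).symm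
    _ = ∫⁻ s, ∫⁻ x, f (s + x) ∂(μ.map (X k)) ∂(μ.map (arr X k)) := by
        rw [hmap, lintegral_prod _ hF.aemeasurable]
    _ = ∫⁻ ω, ∫⁻ x, f (arr X k ω + x) ∂(μ.map (X k)) ∂μ :=
        lintegral_map hg hS

/-- scaling identity between consecutive exponential laws -/
lemma map_scale (μ : Measure Ω) [IsProbabilityMeasure μ]
    (X : ℕ → Ω → ℝ) (l : ℕ → ℝ) (hl : ∀ n, 0 < l n)
    (hXmeas : ∀ n, Measurable (X n))
    (hexp : ∀ n, ∀ t : ℝ, 0 ≤ t →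
      μ {ω | t < X n ω} = ENNReal.ofReal (Real.exp (-(l n * t)))) (n : ℕ) :
    Measure.map (fun x : ℝ => (l n / l (n+1)) * x) (μ.map (X n)) = μ.map (X (n+1)) := by
  have hc : 0 < l n / l (n+1) := div_pos (hl n) (hl (n+1))
  haveI : IsProbabilityMeasure (μ.map (X n)) := Measure.isProbabilityMeasure_map (hXmeas n).aemeasurable
  haveI : IsProbabilityMeasure (μ.map (X (n+1))) :=
    Measure.isProbabilityMeasure_map (hXmeas (n+1)).aemeasurable
  haveI : IsProbabilityMeasure (Measure.map (fun x : ℝ => (l n / l (n+1)) * x) (μ.map (X n))) :=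
    Measure.isProbabilityMeasure_map (measurable_const_mul _).aemeasurable
  have hIoi : ∀ (k : ℕ) (r : ℝ), (μ.map (X k)) (Set.Ioi r) = μ {ω | r < X k ω} := by
    intro k r
    rw [Measure.map_apply (hXmeas k) measurableSet_Ioi]
    rfl
  have hIoi1 : ∀ (k : ℕ), (μ.map (X k)) (Set.Ioi (0:ℝ)) = 1 := by
    intro k
    rw [hIoi k 0, hexp k 0 le_rfl]
    simp
  apply MeasureTheory.ext_of_generate_finite (Set.range (Set.Ioi : ℝ → Set ℝ))
    (by rw [BorelSpace.measurable_eq (α := ℝ), borel_eq_generateFrom_Ioi]) isPiSystem_Ioi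
  · rintro s ⟨r, rfl⟩
    rw [Measure.map_apply (measurable_const_mul _) measurableSet_Ioi]
    rcases le_or_gt 0 r with hr | hr
    · have hpre : (fun x : ℝ => (l n / l (n+1)) * x) ⁻¹' Set.Ioi r
          = Set.Ioi (r / (l n / l (n+1))) := by
        ext x
        simp only [Set.mem_preimage, Set.mem_Ioi]
        rw [div_lt_iff₀' hc]
      rw [hpre, hIoi n _, hIoi (n+1) r, hexp n _ (by positivity),
        hexp (n+1) r hr]
      congr 2
      have hn : l n ≠ 0 := (hl n).ne'
      field_simp
    · have h1 : (μ.map (X (n+1))) (Set.Ioi r) = 1 := by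
        refine le_antisymm prob_le_one ?_
        rw [← hIoi1 (n+1)]
        exact measure_mono (Set.Ioi_subset_Ioi hr.le)
      have h2 : (μ.map (X n)) ((fun x : ℝ => (l n / l (n+1)) * x) ⁻¹' Set.Ioi r) = 1 := by
        refine le_antisymm prob_le_one ?_
        rw [← hIoi1 n]
        apply measure_mono
        intro x hx
        simp only [Set.mem_preimage, Set.mem_Ioi] at *
        calc r < 0 := hr
          _ ≤ (l n / l (n+1)) * x := by positivity
      rw [h1, h2]
  · simp

lemma main_ineq (μ : Measure Ω) [IsProbabilityMeasure μ]
    (ρ ρ' : Measure ℝ) [IsProbabilityMeasure ρ] [IsProbabilityMeasure ρ']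
    (H : ℝ → ENNReal) (hH : Measurable H) (hH1 : ∀ s, H s ≤ 1)
    (hkey : ∀ s x y : ℝ, 0 ≤ s → 0 ≤ x → 0 ≤ y →
      H (s + x) * H (s + y) ≤ H s * H (s + x + y))
    (hAD : ∀ s : ℝ, (∫⁻ x, H (s + x) ∂ρ) ≤ ∫⁻ y, H (s + y) ∂ρ')
    (haeρ : ∀ᵐ x ∂ρ, 0 ≤ x) (haeρ' : ∀ᵐ y ∂ρ', 0 ≤ y)
    (S : Ω → ℝ) (hS : Measurable S) (hSnonneg : ∀ ω, 0 ≤ S ω) :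
    (∫⁻ ω, (∫⁻ x, H (S ω + x) ∂ρ) ∂μ) ^ 2 ≤
      (∫⁻ ω, H (S ω) ∂μ) *
        (∫⁻ ω, (∫⁻ x, ∫⁻ y, H (S ω + x + y) ∂ρ' ∂ρ) ∂μ) := by
  set A : ℝ → ENNReal := fun s => ∫⁻ x, H (s + x) ∂ρ with hA
  set D : ℝ → ENNReal := fun s => ∫⁻ y, H (s + y) ∂ρ' with hD
  set C : ℝ → ENNReal := fun s => ∫⁻ x, D (s + x) ∂ρ with hC
  have hCeq : ∀ s, C s = ∫⁻ x, ∫⁻ y, H (s + x + y) ∂ρ' ∂ρ := fun s => rfl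
  -- integrals of H are ≤ 1 over probability measures
  have hint1 : ∀ (ν : Measure ℝ) [IsProbabilityMeasure ν] (g : ℝ → ENNReal),
      (∀ x, g x ≤ 1) → (∫⁻ x, g x ∂ν) ≤ 1 := by
    intro ν hν g hg
    calc ∫⁻ x, g x ∂ν ≤ ∫⁻ _, 1 ∂ν := lintegral_mono hg
      _ = 1 := by simp
  have hD1 : ∀ s, D s ≤ 1 := fun s => hint1 ρ' _ (fun x => hH1 _)
  have hA1 : ∀ s, A s ≤ 1 := fun s => hint1 ρ _ (fun x => hH1 _)
  -- pointwise inequality : A s ^ 2 ≤ H s * C s for s ≥ 0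
  have hpoint : ∀ s : ℝ, 0 ≤ s → A s ^ 2 ≤ H s * C s := by
    intro s hs
    have step2 : A s * D s ≤ H s * C s := by
      have e1 : A s * D s = ∫⁻ x, ∫⁻ y, H (s + x) * H (s + y) ∂ρ' ∂ρ := by
        rw [hA]
        rw [← lintegral_mul_const' (D s) _ (lt_of_le_of_lt (hD1 s) ENNReal.one_lt_top).ne]
        congr 1
        funext x
        rw [hD, ← lintegral_const_mul' _ _ (lt_of_le_of_lt (hH1 (s+x)) ENNReal.one_lt_top).ne]
      rw [e1]
      have e2 : H s * C s = ∫⁻ x, ∫⁻ y, H s * H (s + x + y) ∂ρ' ∂ρ := by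
        rw [hCeq, ← lintegral_const_mul' _ _ (lt_of_le_of_lt (hH1 s) ENNReal.one_lt_top).ne]
        congr 1
        funext x
        rw [← lintegral_const_mul' _ _ (lt_of_le_of_lt (hH1 s) ENNReal.one_lt_top).ne]
      rw [e2]
      apply lintegral_mono_ae
      filter_upwards [haeρ] with x hx
      apply lintegral_mono_ae
      filter_upwards [haeρ'] with y hy
      exact hkey s x y hs hx hy
    calc A s ^ 2 = A s * A s := sq (A s) ▸ sq (A s) ▸ by ring
      _ ≤ A s * D s := mul_le_mul_right (hAD s) _
      _ ≤ H s * C s := step2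
  -- measurability
  have hHS : Measurable fun ω => H (S ω) := hH.comp hS
  have hAmeas : Measurable A :=
    Measurable.lintegral_prod_right (f := fun s x => H (s + x))
      (hH.comp (measurable_fst.add measurable_snd))
  have hDmeas : Measurable D :=
    Measurable.lintegral_prod_right (f := fun s y => H (s + y))
      (hH.comp (measurable_fst.add measurable_snd))
  have hCmeas : Measurable C :=
    Measurable.lintegral_prod_right (f := fun s x => D (s + x))
      (hDmeas.comp (measurable_fst.add measurable_snd))
  -- Cauchy–Schwarz
  have hps : ∀ ω, A (S ω) ≤ H (S ω) ^ ((2:ℝ)⁻¹) * C (S ω) ^ ((2:ℝ)⁻¹) := by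
    intro ω
    have h1 := ENNReal.rpow_le_rpow (hpoint (S ω) (hSnonneg ω)) (by norm_num : (0:ℝ) ≤ 2⁻¹)
    have e1 : (A (S ω) ^ 2) ^ ((2:ℝ)⁻¹) = A (S ω) := by
      rw [← ENNReal.rpow_natCast (A (S ω)) 2, ← ENNReal.rpow_mul]
      norm_num
    have e2 : (H (S ω) * C (S ω)) ^ ((2:ℝ)⁻¹)
        = H (S ω) ^ ((2:ℝ)⁻¹) * C (S ω) ^ ((2:ℝ)⁻¹) :=
      ENNReal.mul_rpow_of_nonneg _ _ (by norm_num)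
    rwa [e1, e2] at h1
  have hCS : (∫⁻ ω, A (S ω) ∂μ) ≤
      (∫⁻ ω, H (S ω) ∂μ) ^ ((2:ℝ)⁻¹) * (∫⁻ ω, C (S ω) ∂μ) ^ ((2:ℝ)⁻¹) := by
    calc (∫⁻ ω, A (S ω) ∂μ)
        ≤ ∫⁻ ω, H (S ω) ^ ((2:ℝ)⁻¹) * C (S ω) ^ ((2:ℝ)⁻¹) ∂μ := lintegral_mono hps
      _ ≤ (∫⁻ ω, (H (S ω) ^ ((2:ℝ)⁻¹)) ^ (2:ℝ) ∂μ) ^ ((1:ℝ)/2)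
            * (∫⁻ ω, (C (S ω) ^ ((2:ℝ)⁻¹)) ^ (2:ℝ) ∂μ) ^ ((1:ℝ)/2) := by
          exact ENNReal.lintegral_mul_le_Lp_mul_Lq μ
            Real.HolderConjugate.two_two
            ((hHS.pow_const _).aemeasurable)
            (((hCmeas.comp hS).pow_const _).aemeasurable)
      _ = (∫⁻ ω, H (S ω) ∂μ) ^ ((2:ℝ)⁻¹) * (∫⁻ ω, C (S ω) ∂μ) ^ ((2:ℝ)⁻¹) := by
          congr 1
          · congr 1
            · congr 1; funext ω; rw [← ENNReal.rpow_mul]; norm_num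
            · norm_num
          · congr 1
            · congr 1; funext ω; rw [← ENNReal.rpow_mul]; norm_num
            · norm_num
  calc (∫⁻ ω, A (S ω) ∂μ) ^ 2
      ≤ ((∫⁻ ω, H (S ω) ∂μ) ^ ((2:ℝ)⁻¹) * (∫⁻ ω, C (S ω) ∂μ) ^ ((2:ℝ)⁻¹)) ^ 2 :=
        pow_le_pow_left' hCS 2
    _ = (∫⁻ ω, H (S ω) ∂μ) * (∫⁻ ω, C (S ω) ∂μ) := by
        rw [mul_pow, ← ENNReal.rpow_natCast (_ ^ ((2:ℝ)⁻¹)) 2,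
          ← ENNReal.rpow_natCast ((∫⁻ ω, C (S ω) ∂μ) ^ ((2:ℝ)⁻¹)) 2,
          ← ENNReal.rpow_mul, ← ENNReal.rpow_mul]
        norm_num

end AuxLemmas

/-- pure birth process. Let `X 0, X 1, …` be mutually
independent, with `X n` exponentially distributed with rate `l n > 0`
(characterized by the survival function `P(X n > t) = exp (-(l n) t)` for
`t ≥ 0`), where `l` is increasing, and let `N` be the associated counting
process (a pure birth process with rates `l n`). If `T` is a DFR nonnegative
random time independent of the process, then `N(T)` is d-DFR. -/
theorem stmt6
    (μ : Measure Ω) [IsProbabilityMeasure μ]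
    (X : ℕ → Ω → ℝ) (T : Ω → ℝ) (l : ℕ → ℝ)
    (hl : ∀ n, 0 < l n) (hlmono : Monotone l)
    (hXmeas : ∀ n, Measurable (X n)) (hXnonneg : ∀ n ω, 0 ≤ X n ω)
    (hexp : ∀ n, ∀ t : ℝ, 0 ≤ t →
      μ {ω | t < X n ω} = ENNReal.ofReal (Real.exp (-(l n * t))))
    (hiid : iIndepFun X μ)
    (hTmeas : Measurable T) (hTnonneg : ∀ ω, 0 ≤ T ω)
    (hindep : IndepFun T (fun ω n => X n ω) μ)
    (hDFR : IsDFR μ T) :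
    IsdDFR μ (fun ω => countN X (T ω) ω) := by
  intro n
  -- survival function of T (with ≥)
  set H : ℝ → ENNReal := fun s => μ {ω' | s ≤ T ω'} with hHdef
  have hHmeas : Measurable H := H_measurable μ hTmeas
  have hH1 : ∀ s, H s ≤ 1 := fun s => prob_le_one
  have hHanti : Antitone H := by
    intro u v huv
    apply measure_mono
    intro ω hω
    simp only [Set.mem_setOf_eq] at *
    linarith
  have hkey : ∀ s x y : ℝ, 0 ≤ s → 0 ≤ x → 0 ≤ y →
      H (s + x) * H (s + y) ≤ H s * H (s + x + y) :=
    fun s x y hs hx hy => surv_key μ hTmeas hDFR hs hx hy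
  set ρ : Measure ℝ := μ.map (X n) with hρdef
  set ρ' : Measure ℝ := μ.map (X (n+1)) with hρ'def
  haveI : IsProbabilityMeasure ρ := Measure.isProbabilityMeasure_map (hXmeas n).aemeasurable
  haveI : IsProbabilityMeasure ρ' := Measure.isProbabilityMeasure_map (hXmeas (n+1)).aemeasurable
  have haeρ : ∀ᵐ x ∂ρ, 0 ≤ x := by
    rw [hρdef, MeasureTheory.ae_map_iff (hXmeas n).aemeasurable
      (by exact measurableSet_Ici : MeasurableSet {x : ℝ | 0 ≤ x})]
    exact ae_of_all _ (hXnonneg n)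
  have haeρ' : ∀ᵐ y ∂ρ', 0 ≤ y := by
    rw [hρ'def, MeasureTheory.ae_map_iff (hXmeas (n+1)).aemeasurable
      (by exact measurableSet_Ici : MeasurableSet {x : ℝ | 0 ≤ x})]
    exact ae_of_all _ (hXnonneg (n+1))
  have hAD : ∀ s : ℝ, (∫⁻ x, H (s + x) ∂ρ) ≤ ∫⁻ y, H (s + y) ∂ρ' := by
    intro s
    have hsc := map_scale μ X l hl hXmeas hexp n
    set c := l n / l (n+1) with hcdef
    have hc1 : c ≤ 1 := (div_le_one (hl (n+1))).2 (hlmono (Nat.le_succ n))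
    have hmapint : ∫⁻ y, H (s + y) ∂ρ' = ∫⁻ x, H (s + c * x) ∂ρ := by
      rw [hρ'def, hρdef, ← hsc]
      exact lintegral_map (hHmeas.comp (measurable_id.const_add s))
        (measurable_const_mul c)
    rw [hmapint]
    apply lintegral_mono_ae
    filter_upwards [haeρ] with x hx
    apply hHanti
    have : c * x ≤ x := mul_le_of_le_one_left hx hc1
    linarith
  -- rewrite the three events
  have hev : ∀ k : ℕ, {ω | (k : ℕ∞) ≤ countN X (T ω) ω} = {ω | arr X k ω ≤ T ω} := by
    intro k
    ext ω
    exact countN_ge_iff hXnonneg (hTnonneg ω) k ω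
  have keyrepr : ∀ k : ℕ, μ {ω | (k : ℕ∞) ≤ countN X (T ω) ω}
      = ∫⁻ ω, H (arr X k ω) ∂μ := by
    intro k
    rw [hev k]
    exact event_repr μ X T hXmeas hTmeas hindep k
  have hcast1 : ((n : ℕ∞) + 1) = (((n+1 : ℕ)) : ℕ∞) := by norm_cast
  have hcast2 : ((n : ℕ∞) + 2) = (((n+2 : ℕ)) : ℕ∞) := by norm_cast
  simp only [hcast1, hcast2]
  rw [keyrepr n, keyrepr (n+1), keyrepr (n+2)]
  -- disintegration
  have earr : ∀ k : ℕ, ∀ ω, arr X (k+1) ω = arr X k ω + X k ω := by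
    intro k ω
    exact Finset.sum_range_succ _ k
  have hDmeas : Measurable (fun s : ℝ => ∫⁻ y, H (s + y) ∂ρ') :=
    Measurable.lintegral_prod_right (f := fun s y => H (s + y))
      (hHmeas.comp (measurable_fst.add measurable_snd))
  have I1 : ∫⁻ ω, H (arr X (n+1) ω) ∂μ
      = ∫⁻ ω, (∫⁻ x, H (arr X n ω + x) ∂ρ) ∂μ := by
    calc ∫⁻ ω, H (arr X (n+1) ω) ∂μ
        = ∫⁻ ω, H (arr X n ω + X n ω) ∂μ := by
          congr 1; funext ω; rw [earr n ω]
      _ = ∫⁻ ω, (∫⁻ x, H (arr X n ω + x) ∂ρ) ∂μ :=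
          key_step μ X hXmeas hiid n hHmeas
  have I2 : ∫⁻ ω, H (arr X (n+2) ω) ∂μ
      = ∫⁻ ω, (∫⁻ x, ∫⁻ y, H (arr X n ω + x + y) ∂ρ' ∂ρ) ∂μ := by
    calc ∫⁻ ω, H (arr X (n+2) ω) ∂μ
        = ∫⁻ ω, H (arr X (n+1) ω + X (n+1) ω) ∂μ := by
          congr 1; funext ω; rw [earr (n+1) ω]
      _ = ∫⁻ ω, (∫⁻ y, H (arr X (n+1) ω + y) ∂ρ') ∂μ :=
          key_step μ X hXmeas hiid (n+1) hHmeas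
      _ = ∫⁻ ω, (fun s => ∫⁻ y, H (s + y) ∂ρ') (arr X n ω + X n ω) ∂μ := by
          congr 1; funext ω; rw [earr n ω]
      _ = ∫⁻ ω, (∫⁻ x, (fun s => ∫⁻ y, H (s + y) ∂ρ') (arr X n ω + x) ∂ρ) ∂μ :=
          key_step μ X hXmeas hiid n hDmeas
      _ = ∫⁻ ω, (∫⁻ x, ∫⁻ y, H (arr X n ω + x + y) ∂ρ' ∂ρ) ∂μ := rfl
  rw [I1, I2]
  exact main_ineq μ ρ ρ' H hHmeas hH1 hkey hAD haeρ haeρ'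
    (arr X n) (arr_measurable hXmeas n) (fun ω => arr_nonneg hXnonneg n ω)
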